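/- Let N be a finite nonempty set of unit vectors in ℝ^d and let X ⊆ ℝ^d be a finite nonempty set. For each u ∈ N, let p̄_u ∈ X be a point attaining max_{p∈X} ⟨p, u⟩, and let X̄ = { p̄_u : u ∈ N }. Then for any c ∈ ℝ^d and r ≥ 0, if δ_N(p̄_u, c) ≤ r for every u ∈ N, then δ_N(p, c) ≤ r for every p ∈ X; that is, any δ_N-ball containing the extreme points X̄ also contains all of X. -/

import Mathlib

/-- The polyhedral distance defined by a finite nonempty set `N` of unit vectors:
`δ_N(p, q) = max_{u ∈ N} ⟨p − q, u⟩`. -/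
noncomputable def polyDist {d : ℕ} (N : Finset (EuclideanSpace ℝ (Fin d)))
    (hN : N.Nonempty) (p q : EuclideanSpace ℝ (Fin d)) : ℝ :=
  N.sup' hN (fun u => (inner ℝ (p - q) u : ℝ))

/-- Let `X̄ = {p̄_u : u ∈ N}` where `p̄_u ∈ X` maximizes `⟨·, u⟩` over `X`.
Any `δ_N`-ball containing all the extreme points `p̄_u` also contains all of `X`. -/
theorem ball_of_extreme_points_contains_all {d : ℕ}
    (N : Finset (EuclideanSpace ℝ (Fin d))) (hN : N.Nonempty)
    (hunit : ∀ u ∈ N, ‖u‖ = 1)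
    (X : Finset (EuclideanSpace ℝ (Fin d))) (hX : X.Nonempty)
    (pbar : EuclideanSpace ℝ (Fin d) → EuclideanSpace ℝ (Fin d))
    (hbar_mem : ∀ u ∈ N, pbar u ∈ X)
    (hbar_max : ∀ u ∈ N, ∀ p ∈ X, (inner ℝ p u : ℝ) ≤ (inner ℝ (pbar u) u : ℝ))
    (c : EuclideanSpace ℝ (Fin d)) (r : ℝ) (hr : 0 ≤ r)
    (hball : ∀ u ∈ N, polyDist N hN (pbar u) c ≤ r) :
    ∀ p ∈ X, polyDist N hN p c ≤ r := by
  intro p hp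
  rw [polyDist, Finset.sup'_le_iff]
  intro u hu
  have h1 : (inner ℝ (p - c) u : ℝ) = inner ℝ p u - inner ℝ c u := by
    rw [inner_sub_left]
  have h2 : (inner ℝ (pbar u - c) u : ℝ) = inner ℝ (pbar u) u - inner ℝ c u := by
    rw [inner_sub_left]
  have h3 : (inner ℝ (p - c) u : ℝ) ≤ inner ℝ (pbar u - c) u := by
    rw [h1, h2]
    have := hbar_max u hu p hp
    linarith
  calc (inner ℝ (p - c) u : ℝ) ≤ inner ℝ (pbar u - c) u := h3
    _ ≤ polyDist N hN (pbar u) c := Finset.le_sup' _ hu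
    _ ≤ r := hball u hu
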